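/- (Uniqueness of nucleolus on a compact convex set) Let X ⊆ ℝ^N be a nonempty compact convex set of payoff vectors for a cooperative game (N,u). Then the set of x ∈ X whose sorted excess vector θ(x) is lexicographically minimal over X is nonempty; moreover if X is the set of imputations, this set is a singleton (the nucleolus is unique). -/

import Mathlib

open Finset

variable {N : Type*} [Fintype N] [DecidableEq N]

noncomputable def excess (u : Finset N → ℝ) (x : N → ℝ) (C : Finset N) : ℝ :=
  u C - ∑ i ∈ C, x i

noncomputable def theta (u : Finset N → ℝ) (x : N → ℝ) : List ℝ :=
  ((Finset.univ.powerset.val.map (excess u x)).sort (· ≤ ·)).reverse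

def lexLe (a b : List ℝ) : Prop := a = b ∨ List.Lex (· < ·) a b

set_option linter.unusedSectionVars false
set_option maxHeartbeats 1000000

section NucleolusAux

noncomputable def dsort {α : Type*} [Fintype α] (f : α → ℝ) : List ℝ :=
  ((Finset.univ.val.map f).sort (· ≤ ·)).reverse

noncomputable def tk {α : Type*} [Fintype α] (f : α → ℝ) (k : ℕ) : ℝ := ((dsort f).take k).sum

lemma dsort_length {α : Type*} [Fintype α] (f : α → ℝ) : (dsort f).length = Fintype.card α := by
  simp [dsort]

lemma dsort_coe {α : Type*} [Fintype α] (f : α → ℝ) :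
    ((dsort f : List ℝ) : Multiset ℝ) = Finset.univ.val.map f := by
  simp [dsort, Multiset.coe_reverse, Multiset.sort_eq]

lemma dsort_sorted {α : Type*} [Fintype α] (f : α → ℝ) :
    (dsort f).Pairwise (fun a b => b ≤ a) := by
  have h := Multiset.pairwise_sort (Finset.univ.val.map f) (· ≤ ·)
  exact List.pairwise_reverse.mpr h

lemma tk_zero {α : Type*} [Fintype α] (f : α → ℝ) : tk f 0 = 0 := by simp [tk]

lemma take_sum_le_cons : ∀ (j : ℕ) (a : ℝ) (L : List ℝ),
    (a :: L).Pairwise (fun x y => y ≤ x) → j ≤ L.length →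
    (L.take j).sum ≤ ((a :: L).take j).sum := by
  intro j
  induction j with
  | zero => intro a L _ _; simp
  | succ j ih =>
    intro a L hs hj
    match L with
    | [] => simp at hj
    | b :: L' =>
      have hab : b ≤ a := (List.pairwise_cons.mp hs).1 b (by simp)
      have hs' : (b :: L').Pairwise (fun x y => y ≤ x) := (List.pairwise_cons.mp hs).2
      have hj' : j ≤ L'.length := by simpa using hj
      have := ih b L' hs' hj'
      simp only [List.take_succ_cons, List.sum_cons]
      linarith

lemma sublist_sum_le {l L : List ℝ} (h : l.Sublist L)
    (hs : L.Pairwise (fun x y => y ≤ x)) : l.sum ≤ (L.take l.length).sum := by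
  induction h with
  | slnil => simp
  | @cons l L a h ih =>
    have hs' : L.Pairwise (fun x y => y ≤ x) := (List.pairwise_cons.mp hs).2
    have h1 := ih hs'
    have h2 := take_sum_le_cons l.length a L hs h.length_le
    linarith
  | @cons_cons l L a h ih =>
    have hs' : L.Pairwise (fun x y => y ≤ x) := (List.pairwise_cons.mp hs).2
    have h1 := ih hs'
    simp only [List.length_cons, List.take_succ_cons, List.sum_cons]
    linarith

lemma sum_le_tk {α : Type*} [Fintype α] [DecidableEq α] (f : α → ℝ) (S : Finset α) :
    ∑ i ∈ S, f i ≤ tk f S.card := by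
  have hle : (S.val.map f : Multiset ℝ) ≤ ((dsort f : List ℝ) : Multiset ℝ) := by
    rw [dsort_coe]
    exact Multiset.map_le_map (Finset.val_le_iff.mpr (Finset.subset_univ S))
  set s : Multiset ℝ := S.val.map f with hs
  have h1 : ((s.toList : List ℝ) : Multiset ℝ) = s := Multiset.coe_toList s
  have hsub : s.toList.Subperm (dsort f) := by
    rw [← Multiset.coe_le, h1]; exact hle
  obtain ⟨l', hperm, hsl⟩ := hsub
  have hsum : l'.sum = ∑ i ∈ S, f i := by
    rw [hperm.sum_eq, Multiset.sum_toList, hs]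
    rfl
  have hlen : l'.length = S.card := by
    rw [hperm.length_eq, Multiset.length_toList, hs, Multiset.card_map]
    rfl
  have := sublist_sum_le hsl (dsort_sorted f)
  rw [hsum, hlen] at this
  exact this

lemma exists_top {α : Type*} [Fintype α] [DecidableEq α] (f : α → ℝ) :
    ∀ k, k ≤ Fintype.card α →
    ∃ S : Finset α, S.card = k ∧ (S.val.map f : Multiset ℝ) = (((dsort f).take k : List ℝ) : Multiset ℝ) := by
  intro k
  induction k with
  | zero => intro _; exact ⟨∅, by simp, by simp⟩
  | succ k ih =>
    intro hk1
    obtain ⟨S, hcard, hmap⟩ := ih (Nat.le_of_succ_le hk1)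
    set L := dsort f with hL
    have hklen : k < L.length := by rw [dsort_length]; omega
    set v := L[k] with hv
    set R : Multiset α := Finset.univ.val - S.val with hR
    have hSle : S.val ≤ Finset.univ.val := Finset.val_le_iff.mpr (Finset.subset_univ S)
    have hsplit : S.val + R = Finset.univ.val := add_tsub_cancel_of_le hSle
    have hmapsplit : (Finset.univ.val.map f : Multiset ℝ) = S.val.map f + R.map f := by
      rw [← hsplit, Multiset.map_add]
    have hdropmem : v ∈ L.drop k := by
      rw [List.drop_eq_getElem_cons hklen]; exact List.mem_cons_self
    have hcount : Multiset.count v (R.map f) = Multiset.count v (↑(L.drop k) : Multiset ℝ) := by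
      have h1 : (↑L : Multiset ℝ) = (↑(L.take k) : Multiset ℝ) + (↑(L.drop k) : Multiset ℝ) := by
        conv_lhs => rw [← List.take_append_drop k L]
        rfl
      have h2 : (↑L : Multiset ℝ) = S.val.map f + R.map f := by
        rw [hL, dsort_coe, hmapsplit]
      have h3 : Multiset.count v (S.val.map f) = Multiset.count v (↑(L.take k) : Multiset ℝ) := by
        rw [hmap]
      have := congrArg (Multiset.count v) (h1.symm.trans h2)
      rw [Multiset.count_add, Multiset.count_add, h3] at this
      omega
    have hvmem : v ∈ R.map f := by
      rw [← Multiset.count_pos, hcount, Multiset.count_pos]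
      exact hdropmem
    obtain ⟨C, hCR, hfC⟩ := Multiset.mem_map.mp hvmem
    have hCnotS : C ∉ S := by
      intro hCS
      have h1 : Multiset.count C Finset.univ.val = 1 :=
        Multiset.count_eq_one_of_mem Finset.univ.nodup (Finset.mem_univ C)
      have h2 : Multiset.count C S.val = 1 :=
        Multiset.count_eq_one_of_mem S.nodup hCS
      have h3 : 0 < Multiset.count C R := Multiset.count_pos.mpr hCR
      rw [hR, Multiset.count_sub, h1, h2] at h3
      omega
    refine ⟨insert C S, ?_, ?_⟩
    · rw [Finset.card_insert_of_notMem hCnotS, hcard]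
    · rw [Finset.insert_val_of_notMem hCnotS, Multiset.map_cons, hmap, hfC]
      have : L.take (k+1) = L.take k ++ [v] := by
        rw [List.take_succ]
        congr 1
        rw [List.getElem?_eq_getElem hklen]
        rfl
      rw [this]
      simp
      exact (List.perm_append_singleton _ _).symm

lemma exists_top_sum {α : Type*} [Fintype α] [DecidableEq α] (f : α → ℝ) {k : ℕ}
    (hk : k ≤ Fintype.card α) :
    ∃ S : Finset α, S.card = k ∧ ∑ i ∈ S, f i = tk f k := by
  obtain ⟨S, hcard, hmap⟩ := exists_top f k hk
  refine ⟨S, hcard, ?_⟩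
  have : (∑ i ∈ S, f i) = (S.val.map f).sum := rfl
  rw [this, hmap, tk]
  simp

lemma lex_of_firstdiff : ∀ (k : ℕ) (a b : List ℝ), (hk : k < a.length) → (hk' : k < b.length) →
    (∀ i (h1 : i < k), a[i]'(by omega) = b[i]'(by omega)) → a[k] < b[k] → List.Lex (· < ·) a b := by
  intro k
  induction k with
  | zero =>
    intro a b hk hk' _ hlt
    match a, b with
    | x :: a', y :: b' =>
      exact List.Lex.rel (by simpa using hlt)
  | succ k ih =>
    intro a b hk hk' hpre hlt
    match a, b with
    | x :: a', y :: b' =>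
      have hxy : x = y := by simpa using hpre 0 (Nat.succ_pos k)
      subst hxy
      apply List.Lex.cons
      apply ih a' b' (by simpa using hk) (by simpa using hk')
      · intro i h1
        simpa using hpre (i+1) (by omega)
      · simpa using hlt

lemma lex_asymm : ∀ {a b : List ℝ}, List.Lex (· < ·) a b → List.Lex (· < ·) b a → False := by
  intro a b h
  induction h with
  | nil => intro h2; cases h2
  | @cons a l1 l2 h ih =>
    intro h2
    cases h2 with
    | cons h3 => exact ih h3
    | rel h3 => exact lt_irrefl _ h3
  | @rel a l1 b l2 h =>
    intro h2
    cases h2 with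
    | cons h3 => exact lt_irrefl _ h
    | rel h3 => exact lt_asymm h h3

lemma lex_irrefl {a : List ℝ} (h : List.Lex (· < ·) a a) : False := lex_asymm h h

lemma dsort_getElem {α : Type*} [Fintype α] (f : α → ℝ) {k : ℕ} (hk : k < Fintype.card α) :
    (dsort f)[k]'(by rw [dsort_length]; exact hk) = tk f (k+1) - tk f k := by
  have h := List.sum_take_succ (dsort f) k (by rw [dsort_length]; exact hk)
  simp only [tk]
  rw [h]
  ring

lemma dsort_eq_of_tk {α : Type*} [Fintype α] {f g : α → ℝ}
    (h : ∀ j, j ≤ Fintype.card α → tk f j = tk g j) : dsort f = dsort g := by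
  apply List.ext_getElem (by rw [dsort_length, dsort_length])
  intro n h1 h2
  have hn : n < Fintype.card α := by rw [dsort_length] at h1; exact h1
  rw [dsort_getElem f hn, dsort_getElem g hn, h n (by omega), h (n+1) (by omega)]

lemma lex_of_tk {α : Type*} [Fintype α] {f g : α → ℝ} {j : ℕ} (hj : j ≤ Fintype.card α)
    (hpre : ∀ i, i < j → tk f i = tk g i) (hlt : tk f j < tk g j) :
    List.Lex (· < ·) (dsort f) (dsort g) := by
  match j with
  | 0 => rw [tk_zero, tk_zero] at hlt; exact absurd hlt (lt_irrefl 0)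
  | k + 1 =>
    have hk : k < Fintype.card α := by omega
    apply lex_of_firstdiff k (dsort f) (dsort g) (by rw [dsort_length]; exact hk)
      (by rw [dsort_length]; exact hk)
    · intro i h1
      have hi : i < Fintype.card α := by omega
      rw [dsort_getElem f hi, dsort_getElem g hi, hpre i (by omega), hpre (i+1) (by omega)]
    · rw [dsort_getElem f hk, dsort_getElem g hk, hpre k (by omega)]
      have := hpre k (by omega)
      linarith

lemma tk_eq_sup'2 {α : Type*} [Fintype α] [DecidableEq α] (f : α → ℝ) {k : ℕ}
    (hk : k ≤ Fintype.card α)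
    (hne : (Finset.powersetCard k (Finset.univ : Finset α)).Nonempty) :
    tk f k = (Finset.powersetCard k (Finset.univ : Finset α)).sup' hne (fun S => ∑ i ∈ S, f i) := by
  apply le_antisymm
  · obtain ⟨S, hcard, hsum⟩ := exists_top_sum f hk
    rw [← hsum]
    exact Finset.le_sup' (fun S => ∑ i ∈ S, f i) (Finset.mem_powersetCard.mpr ⟨Finset.subset_univ S, hcard⟩)
  · apply Finset.sup'_le
    intro S hS
    have := (Finset.mem_powersetCard.mp hS).2
    calc ∑ i ∈ S, f i ≤ tk f S.card := sum_le_tk f S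
    _ = tk f k := by rw [this]

lemma cont_tk {N : Type*} [Fintype N] [DecidableEq N] (u : Finset N → ℝ) {k : ℕ}
    (hk : k ≤ Fintype.card (Finset N)) :
    Continuous (fun x : N → ℝ => tk (excess u x) k) := by
  have hne : (Finset.powersetCard k (Finset.univ : Finset (Finset N))).Nonempty :=
    Finset.powersetCard_nonempty.mpr (by simpa using hk)
  have heq : (fun x : N → ℝ => tk (excess u x) k) =
      (fun x : N → ℝ => (Finset.powersetCard k (Finset.univ : Finset (Finset N))).sup' hne
        (fun S => ∑ C ∈ S, excess u x C)) := by
    funext x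
    exact tk_eq_sup'2 (excess u x) hk hne
  rw [heq]
  apply Continuous.finset_sup'_apply hne
  intro S _
  unfold excess
  fun_prop

lemma tk_congr {α : Type*} [Fintype α] {f g : α → ℝ} (h : dsort f = dsort g) (k : ℕ) :
    tk f k = tk g k := by rw [tk, tk, h]

lemma argmax_eq_filter {α : Type*} [Fintype α] [DecidableEq α] (f : α → ℝ) (t : ℝ) (S : Finset α)
    [DecidablePred (fun i => t ≤ f i)]
    (hcard : S.card = (Finset.univ.filter (fun i => t ≤ f i)).card)
    (hsum : ∑ i ∈ S, f i = tk f S.card) :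
    S = Finset.univ.filter (fun i => t ≤ f i) := by
  set F := Finset.univ.filter (fun i => t ≤ f i) with hF
  have hsub : S ⊆ F := by
    intro C0 hC0
    by_contra hC0F
    have hfC0 : f C0 < t := by
      by_contra hge
      exact hC0F (Finset.mem_filter.mpr ⟨Finset.mem_univ _, le_of_not_gt hge⟩)
    -- find C1 ∈ F \ S
    have hFS : ¬ F ⊆ S := by
      intro hFsub
      have : F = S := Finset.eq_of_subset_of_card_le hFsub (by omega)
      rw [← this] at hC0
      exact hC0F hC0
    obtain ⟨C1, hC1F, hC1S⟩ := Finset.not_subset.mp hFS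
    have hfC1 : t ≤ f C1 := (Finset.mem_filter.mp hC1F).2
    set S' := insert C1 (S.erase C0) with hS'
    have hC1e : C1 ∉ S.erase C0 := fun h => hC1S (Finset.mem_of_mem_erase h)
    have hScard : 1 ≤ S.card := Finset.card_pos.mpr ⟨C0, hC0⟩
    have hcard' : S'.card = S.card := by
      rw [hS', Finset.card_insert_of_notMem hC1e, Finset.card_erase_of_mem hC0]
      omega
    have hsum' : ∑ i ∈ S', f i = f C1 + (∑ i ∈ S, f i - f C0) := by
      rw [hS', Finset.sum_insert hC1e]
      have := Finset.sum_erase_add S f hC0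
      linarith
    have hle := sum_le_tk f S'
    rw [hcard', ← hsum] at hle
    linarith
  exact Finset.eq_of_subset_of_card_le hsub (by omega)

lemma filter_card_eq_of_dsort_eq {α : Type*} [Fintype α] [DecidableEq α] {f g : α → ℝ}
    (h : dsort f = dsort g) (t : ℝ) [DecidablePred (fun i => t ≤ f i)]
    [DecidablePred (fun i => t ≤ g i)] :
    (Finset.univ.filter (fun i => t ≤ f i)).card = (Finset.univ.filter (fun i => t ≤ g i)).card := by
  have hmf : (Finset.univ.val.map f : Multiset ℝ) = Finset.univ.val.map g := by
    rw [← dsort_coe, ← dsort_coe, h]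
  have key : ∀ (f' : α → ℝ) (_ : DecidablePred (fun i => t ≤ f' i)),
      ((Finset.univ.filter (fun i => t ≤ f' i)).card : ℕ) =
      Multiset.card ((Finset.univ.val.map f' : Multiset ℝ).filter (fun v => t ≤ v)) := by
    intro f' inst
    classical
    rw [Multiset.filter_map]
    rw [Multiset.card_map]
    simp [Finset.card, Finset.filter_val, Function.comp]
  rw [key f inferInstance, key g inferInstance, hmf]

lemma key_lex {α : Type*} [Fintype α] [DecidableEq α] {f g : α → ℝ}
    (hfg : dsort f = dsort g) (hne : f ≠ g) :
    List.Lex (· < ·) (dsort (fun i => (f i + g i)/2)) (dsort f) := by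
  classical
  set h : α → ℝ := fun i => (f i + g i)/2 with hh
  set m := Fintype.card α with hm
  have hsumh : ∀ S : Finset α, ∑ i ∈ S, h i = ((∑ i ∈ S, f i) + ∑ i ∈ S, g i)/2 := by
    intro S
    rw [hh]
    rw [← Finset.sum_add_distrib]
    rw [Finset.sum_div]
  have hTle : ∀ j, j ≤ m → tk h j ≤ tk f j := by
    intro j hj
    obtain ⟨S, hcard, hsum⟩ := exists_top_sum h hj
    have h1 := sum_le_tk f S
    have h2 := sum_le_tk g S
    rw [hcard] at h1 h2
    have h3 := tk_congr hfg j
    have h4 := hsumh S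
    linarith [hsum, h4]
  by_cases hex : ∃ j, j ≤ m ∧ tk h j < tk f j
  · obtain ⟨j, hj, hlt⟩ := hex
    have hex' : ∃ j, j ≤ m ∧ tk h j < tk f j := ⟨j, hj, hlt⟩
    obtain ⟨hj0m, hj0lt⟩ := Nat.find_spec hex'
    apply lex_of_tk hj0m
    · intro i hi
      have hni := Nat.find_min hex' hi
      push_neg at hni
      have him : i ≤ m := by omega
      exact le_antisymm (hTle i him) (hni him)
    · exact hj0lt
  · -- all equal: derive contradiction
    exfalso
    push_neg at hex
    have hTeq : ∀ j, j ≤ m → tk h j = tk f j := fun j hj => le_antisymm (hTle j hj) (hex j hj)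
    -- sums over univ are equal
    have hsum_univ : ∑ i, f i = ∑ i, g i := by
      have h1 : (∑ i, f i) = ((dsort f : List ℝ) : Multiset ℝ).sum := by
        rw [dsort_coe]; rfl
      have h2 : (∑ i, g i) = ((dsort g : List ℝ) : Multiset ℝ).sum := by
        rw [dsort_coe]; rfl
      rw [h1, h2, hfg]
    -- exists C* with g C* < f C*
    have hCex : ∃ C, g C < f C := by
      by_contra hc
      push_neg at hc
      have hne' : ∃ C, f C ≠ g C := by
        by_contra hc2
        push_neg at hc2
        exact hne (funext hc2)
      obtain ⟨C0, hC0⟩ := hne'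
      have : ∑ i, f i < ∑ i, g i :=
        Finset.sum_lt_sum (fun i _ => hc i) ⟨C0, Finset.mem_univ _, lt_of_le_of_ne (hc C0) hC0⟩
      linarith
    obtain ⟨Cs, hCs⟩ := hCex
    set t := f Cs with ht
    set Ff := Finset.univ.filter (fun i => t ≤ f i) with hFf
    set Fg := Finset.univ.filter (fun i => t ≤ g i) with hFg
    set k := Ff.card with hk
    have hkm : k ≤ m := by
      rw [hk, hm, ← Finset.card_univ]
      exact Finset.card_filter_le _ _
    obtain ⟨S, hcard, hsum⟩ := exists_top_sum h hkm
    have h1 := sum_le_tk f S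
    have h2 := sum_le_tk g S
    rw [hcard] at h1 h2
    have h3 := tk_congr hfg k
    have h4 := hsumh S
    have h5 := hTeq k hkm
    have hSf : ∑ i ∈ S, f i = tk f k := by linarith
    have hSg : ∑ i ∈ S, g i = tk g k := by linarith
    have hSFf : S = Ff := argmax_eq_filter f t S (by rw [hcard, hk]) (by rw [hcard]; exact hSf)
    have hcardg : S.card = Fg.card := by
      rw [hcard, hk]
      exact filter_card_eq_of_dsort_eq hfg t
    have hSFg : S = Fg := argmax_eq_filter g t S hcardg (by rw [hcard]; exact hSg)
    have hCsFf : Cs ∈ Ff := Finset.mem_filter.mpr ⟨Finset.mem_univ _, le_refl t⟩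
    rw [← hSFf, hSFg] at hCsFf
    have : t ≤ g Cs := (Finset.mem_filter.mp hCsFf).2
    rw [ht] at this
    linarith

end NucleolusAux

/-- Over a nonempty compact convex set `X` of payoff vectors, the set of lexicographic
minimizers of the sorted excess vector `θ` is nonempty; moreover if `X` is the
(nonempty) set of imputations, this set is a singleton: the nucleolus is unique. -/
theorem nucleolus_exists_and_unique (u : Finset N → ℝ) (X : Set (N → ℝ))
    (hne : X.Nonempty) (hcomp : IsCompact X) (hconv : Convex ℝ X) :
    {x ∈ X | ∀ y ∈ X, lexLe (theta u x) (theta u y)}.Nonempty ∧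
    (X = {x : N → ℝ | (∑ i, x i = u Finset.univ) ∧ ∀ i : N, u {i} ≤ x i} →
      ∃ z : N → ℝ, {x ∈ X | ∀ y ∈ X, lexLe (theta u x) (theta u y)} = {z}) := by
  classical
  have hthe : ∀ x : N → ℝ, theta u x = dsort (excess u x) := by
    intro x
    rw [theta, dsort, Finset.powerset_univ]
  set m := Fintype.card (Finset N) with hm
  -- iterated minimization
  have main : ∀ k, k ≤ m → ∃ Y : Set (N → ℝ), Y.Nonempty ∧ IsCompact Y ∧ Y ⊆ X ∧
      ∀ x ∈ Y, ∀ y ∈ X,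
        ((∀ j, j ≤ k → tk (excess u x) j = tk (excess u y) j) ∧ y ∈ Y) ∨
        (∃ j, j ≤ k ∧ (∀ i, i < j → tk (excess u x) i = tk (excess u y) i) ∧
          tk (excess u x) j < tk (excess u y) j) := by
    intro k
    induction k with
    | zero =>
      intro _
      refine ⟨X, hne, hcomp, subset_rfl, fun x hx y hy => Or.inl ⟨?_, hy⟩⟩
      intro j hj
      have : j = 0 := Nat.le_zero.mp hj
      subst this
      rw [tk_zero, tk_zero]
    | succ k ih =>
      intro hk1
      obtain ⟨Y, hYne, hYcomp, hYX, hYprop⟩ := ih (by omega)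
      set g : (N → ℝ) → ℝ := fun x => tk (excess u x) (k+1) with hg
      have hgcont : Continuous g := cont_tk u hk1
      obtain ⟨x₀, hx₀Y, hmin⟩ := hYcomp.exists_isMinOn hYne hgcont.continuousOn
      set c := g x₀ with hc
      refine ⟨Y ∩ g ⁻¹' {c}, ⟨x₀, hx₀Y, rfl⟩,
        hYcomp.inter_right ((isClosed_singleton).preimage hgcont), ?_, ?_⟩
      · exact fun x hx => hYX hx.1
      · rintro x ⟨hxY, hxc⟩ y hy
        rcases hYprop x hxY y hy with ⟨hjeq, hyY⟩ | ⟨j, hj, hpre, hlt⟩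
        · by_cases hgy : g y = c
          · refine Or.inl ⟨?_, hyY, hgy⟩
            intro j hj
            rcases Nat.lt_or_ge j (k+1) with h' | h'
            · exact hjeq j (by omega)
            · have : j = k + 1 := by omega
              subst this
              have hx : g x = c := hxc
              rw [show tk (excess u x) (k+1) = g x from rfl,
                show tk (excess u y) (k+1) = g y from rfl, hx, hgy]
          · refine Or.inr ⟨k+1, le_refl _, ?_, ?_⟩
            · intro i hi
              exact hjeq i (by omega)
            · have h1 : c ≤ g y := hmin hyY
              have h2 : g x = c := hxc
              have : c < g y := lt_of_le_of_ne h1 (fun h => hgy h.symm)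
              rw [show tk (excess u x) (k+1) = g x from rfl,
                show tk (excess u y) (k+1) = g y from rfl, h2]
              exact this
        · exact Or.inr ⟨j, by omega, hpre, hlt⟩
  obtain ⟨Y, hYne, hYcomp, hYX, hYprop⟩ := main m le_rfl
  obtain ⟨x₀, hx₀Y⟩ := hYne
  have hx₀min : ∀ y ∈ X, lexLe (theta u x₀) (theta u y) := by
    intro y hy
    rcases hYprop x₀ hx₀Y y hy with ⟨hjeq, _⟩ | ⟨j, hj, hpre, hlt⟩
    · left
      rw [hthe, hthe]
      exact dsort_eq_of_tk hjeq
    · right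
      rw [hthe, hthe]
      exact lex_of_tk hj hpre hlt
  have hx₀M : x₀ ∈ {x ∈ X | ∀ y ∈ X, lexLe (theta u x) (theta u y)} := ⟨hYX hx₀Y, hx₀min⟩
  constructor
  · exact ⟨x₀, hx₀M⟩
  · intro _
    refine ⟨x₀, Set.eq_singleton_iff_unique_mem.mpr ⟨hx₀M, ?_⟩⟩
    rintro y ⟨hyX, hymin⟩
    by_contra hyne
    -- theta u y = theta u x₀
    have hth : theta u y = theta u x₀ := by
      rcases hymin x₀ (hYX hx₀Y) with h | h
      · exact h
      · rcases hx₀min y hyX with h' | h'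
        · exact h'.symm
        · exact absurd h (fun hh => lex_asymm hh h')
    set f := excess u y with hf
    set g' := excess u x₀ with hg'
    have hfg : dsort f = dsort g' := by
      rw [← hthe, ← hthe, hth]
    have hfne : f ≠ g' := by
      intro hEq
      apply hyne
      funext i
      have := congrFun hEq ({i} : Finset N)
      rw [hf, hg'] at this
      simp only [excess, Finset.sum_singleton] at this
      linarith
    set z' : N → ℝ := (1/2 : ℝ) • y + (1/2 : ℝ) • x₀ with hz'
    have hz'X : z' ∈ X := hconv hyX (hYX hx₀Y) (by norm_num) (by norm_num) (by norm_num)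
    have hz'ex : excess u z' = fun C => (f C + g' C)/2 := by
      funext C
      rw [hf, hg']
      simp only [excess, hz', Pi.add_apply, Pi.smul_apply, smul_eq_mul]
      rw [Finset.sum_add_distrib, ← Finset.mul_sum, ← Finset.mul_sum]
      ring
    have hKey : List.Lex (· < ·) (theta u z') (theta u y) := by
      rw [hthe, hthe, hz'ex]
      exact key_lex hfg hfne
    rcases hymin z' hz'X with h | h
    · rw [h] at hKey
      exact lex_irrefl hKey
    · exact lex_asymm hKey h
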